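/- Let H_1, H_2 be parity check matrices over F_2, and let L be any vector of the form L = (Σ_{k,j} λ_{kj} x̄_k ⊗ y_j, Σ_{ℓ,m} κ_{ℓm} a_ℓ ⊗ b̄_m) ∈ F_2^{n_1 n_2 + r_1 r_2}, where the x̄_k ∈ ker(H_1) are linearly independent, the b̄_m ∈ ker(H_2^T) are linearly independent, the y_j are distinct unit vectors in F_2^{n_2} that are linearly independent modulo Im(H_2^T), the a_ℓ are distinct unit vectors in F_2^{r_1} linearly independent modulo Im(H_1), and not all coefficients λ, κ are zero. Then the energy barrier of L with respect to H_X = (H_1 ⊗ I_{n_2} | I_{r_1} ⊗ H_2^T) satisfies Δ_{H_X}(L) ≥ min(Δ_{H_1}, Δ_{H_2^T}), where Δ_{H_1} (resp. Δ_{H_2^T}) denotes the minimum classical energy barrier over nonzero codewords of H_1 (resp. of H_2^T). -/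

import Mathlib

set_option maxHeartbeats 1600000
set_option synthInstance.maxHeartbeats 400000


open Matrix Kronecker

/-- Hamming weight of a vector over `ZMod 2`. -/
def wt {α : Type*} [Fintype α] (v : α → ZMod 2) : ℕ :=
  (Finset.univ.filter fun i => v i ≠ 0).card

/-- Number of nonzero entries of a matrix over `ZMod 2`. -/
def mwt {α β : Type*} [Fintype α] [Fintype β] (M : Matrix α β (ZMod 2)) : ℕ :=
  (Finset.univ.filter fun p : α × β => M p.1 p.2 ≠ 0).card

/-- Energy barrier of a vector `s` w.r.t. parity check matrix `H`: the minimum over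
single-bit-flip paths from `0` to `s` of the maximum energy `wt (H·v)` along the path. -/
noncomputable def eb {α β : Type*} [Fintype α] [Fintype β] (H : Matrix α β (ZMod 2)) (s : β → ZMod 2) : ℕ :=
  sInf {B | ∃ F : ℕ, ∃ v : Fin (F + 1) → β → ZMod 2,
    v 0 = 0 ∧ v (Fin.last F) = s ∧
    (∀ i : Fin F, wt (v i.castSucc + v i.succ) ≤ 1) ∧
    ∀ i, wt (H.mulVec (v i)) ≤ B}

/-- Energy barrier of a classical code: minimum of `eb` over nonzero codewords. -/
noncomputable def codeEB {α β : Type*} [Fintype α] [Fintype β] (M : Matrix α β (ZMod 2)) : ℕ :=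
  sInf {E | ∃ c, c ≠ 0 ∧ M.mulVec c = 0 ∧ eb M c = E}

/-- The X-type parity check matrix of the hypergraph product code. -/
def HX {r1 n1 r2 n2 : ℕ} (H1 : Matrix (Fin r1) (Fin n1) (ZMod 2))
    (H2 : Matrix (Fin r2) (Fin n2) (ZMod 2)) :
    Matrix (Fin r1 × Fin n2) ((Fin n1 × Fin n2) ⊕ (Fin r1 × Fin r2)) (ZMod 2) :=
  Matrix.fromCols (H1 ⊗ₖ (1 : Matrix (Fin n2) (Fin n2) (ZMod 2)))
    ((1 : Matrix (Fin r1) (Fin r1) (ZMod 2)) ⊗ₖ H2ᵀ)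

section Aux

open Module

/-- The dot-product pairing as a linear equivalence to the dual. -/
noncomputable def dotEquiv (F : Type*) [Field F] (n : ℕ) :
    (Fin n → F) ≃ₗ[F] Module.Dual F (Fin n → F) :=
  (Pi.basisFun F (Fin n)).toDualEquiv

lemma single_sum {F : Type*} [Field F] {n : ℕ} (z : Fin n → F) :
    z = ∑ i, z i • (Pi.single i (1 : F) : Fin n → F) := by
  funext j; simp [Finset.sum_apply, Pi.single_apply]

lemma dotEquiv_apply {F : Type*} [Field F] {n : ℕ} (u z : Fin n → F) :
    dotEquiv F n u z = u ⬝ᵥ z := by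
  conv_lhs => rw [single_sum z]
  rw [map_sum]
  simp only [_root_.map_smul, smul_eq_mul]
  have : ∀ i : Fin n, dotEquiv F n u (Pi.single i 1) = u i := by
    intro i
    have h1 : (Pi.single i (1:F) : Fin n → F) = (Pi.basisFun F (Fin n)) i := by
      simp [Pi.basisFun_apply]
    rw [h1]
    show (Pi.basisFun F (Fin n)).toDualEquiv u ((Pi.basisFun F (Fin n)) i) = u i
    rw [Basis.toDualEquiv_apply, Basis.toDual_apply_left, Pi.basisFun_repr]
  simp [this, dotProduct, mul_comm]

/-- Duality: a vector orthogonal to ker H is in the range of Hᵀ. -/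
lemma dual_of_ker {F : Type*} [Field F] {r n : ℕ} (H : Matrix (Fin r) (Fin n) F)
    (u : Fin n → F) (hu : ∀ z, H.mulVec z = 0 → u ⬝ᵥ z = 0) :
    ∃ w, Hᵀ.mulVec w = u := by
  classical
  have hmem : ∀ x : Fin n → F,
      x ∈ (LinearMap.ker H.mulVecLin).dualAnnihilator.map (dotEquiv F n).symm.toLinearMap
      ↔ ∀ z, H.mulVec z = 0 → x ⬝ᵥ z = 0 := by
    intro x
    rw [Submodule.mem_map]
    constructor
    · rintro ⟨f, hf, rfl⟩ z hz
      rw [Submodule.mem_dualAnnihilator] at hf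
      have h2 : (dotEquiv F n) ((dotEquiv F n).symm f) z = f z := by
        rw [(dotEquiv F n).apply_symm_apply]
      rw [show ((dotEquiv F n).symm.toLinearMap f) ⬝ᵥ z
            = (dotEquiv F n) ((dotEquiv F n).symm f) z from (dotEquiv_apply _ _).symm, h2]
      exact hf z (by simpa [LinearMap.mem_ker] using hz)
    · intro h
      refine ⟨dotEquiv F n x, ?_, (dotEquiv F n).symm_apply_apply x⟩
      rw [Submodule.mem_dualAnnihilator]
      intro z hz
      rw [dotEquiv_apply]
      exact h z (by simpa [LinearMap.mem_ker] using hz)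
  have hle : LinearMap.range Hᵀ.mulVecLin
      ≤ (LinearMap.ker H.mulVecLin).dualAnnihilator.map (dotEquiv F n).symm.toLinearMap := by
    rintro x ⟨w, rfl⟩
    rw [hmem]
    intro z hz
    show Hᵀ.mulVec w ⬝ᵥ z = 0
    rw [Matrix.mulVec_transpose, ← dotProduct_mulVec, hz, dotProduct_zero]
  have hn : finrank F (Fin n → F) = n := by
    rw [Module.finrank_pi]; exact Fintype.card_fin n
  have h1 := LinearEquiv.finrank_map_eq (dotEquiv F n).symm
      (LinearMap.ker H.mulVecLin).dualAnnihilator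
  have h2 : finrank F ((Fin n → F) ⧸ LinearMap.ker H.mulVecLin)
      = finrank F (LinearMap.ker H.mulVecLin).dualAnnihilator :=
    (Subspace.quotEquivAnnihilator (LinearMap.ker H.mulVecLin)).finrank_eq
  have h3 := Submodule.finrank_quotient_add_finrank (LinearMap.ker H.mulVecLin)
  rw [hn] at h3
  have h4 : Hᵀ.rank = H.rank := Matrix.rank_transpose H
  have h5 : Hᵀ.rank = finrank F (LinearMap.range Hᵀ.mulVecLin) := rfl
  have h6 : H.rank = finrank F (LinearMap.range H.mulVecLin) := rfl
  have h7 := LinearMap.finrank_range_add_finrank_ker H.mulVecLin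
  rw [hn] at h7
  have heq := Submodule.eq_of_le_of_finrank_le hle (by omega)
  have : u ∈ LinearMap.range Hᵀ.mulVecLin := by rw [heq, hmem]; exact hu
  obtain ⟨w, hw⟩ := this
  exact ⟨w, hw⟩

/-- Selector: there is a kernel vector of `H` picking out `y j0` among the `y j`. -/
lemma exists_selector {F : Type*} [Field F] {r n c : ℕ} (H : Matrix (Fin r) (Fin n) F)
    (y : Fin c → Fin n → F)
    (hind : ∀ μ : Fin c → F, (∃ w, Hᵀ.mulVec w = ∑ j, μ j • y j) → μ = 0)
    (j0 : Fin c) :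
    ∃ z, H.mulVec z = 0 ∧ ∀ j, y j ⬝ᵥ z = if j = j0 then 1 else 0 := by
  classical
  let φ : (Fin n → F) →ₗ[F] (Fin c → F) :=
    { toFun := fun z j => y j ⬝ᵥ z
      map_add' := by intro x x'; funext j; simp [dotProduct_add]
      map_smul' := by intro t x; funext j; simp [dotProduct_smul] }
  have hsingle : (Pi.single j0 1 : Fin c → F) ∈ (LinearMap.ker H.mulVecLin).map φ := by
    by_contra hs
    obtain ⟨f, hf0, hfbot⟩ := Submodule.exists_dual_map_eq_bot_of_notMem hs inferInstance
    set μ : Fin c → F := fun j => f (Pi.single j 1) with hμ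
    have hf : ∀ x : Fin c → F, f x = ∑ j, x j * μ j := by
      intro x
      conv_lhs => rw [single_sum x, map_sum]
      simp only [_root_.map_smul, smul_eq_mul]
      rfl
    have hker : ∀ z, H.mulVec z = 0 → (∑ j, μ j • y j) ⬝ᵥ z = 0 := by
      intro z hz
      have hWz : φ z ∈ (LinearMap.ker H.mulVecLin).map φ :=
        ⟨z, by simpa [LinearMap.mem_ker] using hz, rfl⟩
      have : f (φ z) = 0 := by
        have := hfbot ▸ Submodule.mem_map_of_mem (f := f) hWz
        exact (Submodule.mem_bot F).mp this
      rw [hf] at this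
      have hsum : (∑ j, μ j • y j) ⬝ᵥ z = ∑ j, μ j * (y j ⬝ᵥ z) := by
        simp only [dotProduct, Finset.sum_apply, Pi.smul_apply, smul_eq_mul,
          Finset.sum_mul, Finset.mul_sum, mul_assoc]
        exact Finset.sum_comm
      rw [hsum]
      simpa [φ, mul_comm] using this
    obtain ⟨w, hw⟩ := dual_of_ker H _ hker
    have : μ = 0 := hind μ ⟨w, hw⟩
    apply hf0
    rw [show f (Pi.single j0 1) = μ j0 from rfl, this]
    rfl
  obtain ⟨z, hz, hφz⟩ := hsingle
  refine ⟨z, by simpa [LinearMap.mem_ker] using hz, ?_⟩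
  intro j
  have := congrFun hφz j
  simpa [φ, Pi.single_apply] using this

lemma wt_le_card {α : Type*} [Fintype α] (v : α → ZMod 2) : wt v ≤ Fintype.card α :=
  Finset.card_filter_le _ _

/-- Key weight estimate: contracting one index against coefficients does not
increase the Hamming weight. -/
lemma wt_comp_le {α β γ : Type*} [Fintype α] [Fintype β] [Fintype γ]
    (u : γ → ZMod 2) (w : α → β → ZMod 2) (g : α → β → γ)
    (hg : ∀ a b a' b', g a b = g a' b' → a = a') :
    wt (fun i => ∑ j, u (g i j) * w i j) ≤ wt u := by
  classical
  unfold wt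
  rcases Finset.eq_empty_or_nonempty
    (Finset.univ.filter fun i => (∑ j, u (g i j) * w i j) ≠ 0) with hs | hs
  · rw [hs]; simp
  have key : ∀ i : α, i ∈ (Finset.univ.filter fun i => (∑ j, u (g i j) * w i j) ≠ 0) →
      ∃ j, u (g i j) ≠ 0 := by
    intro i hi
    rw [Finset.mem_filter] at hi
    by_contra h
    push_neg at h
    exact hi.2 (Finset.sum_eq_zero fun j _ => by rw [h j]; ring)
  obtain ⟨i0, hi0⟩ := hs
  obtain ⟨j0, _⟩ := key i0 hi0
  have hβ : Nonempty β := ⟨j0⟩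
  set J : α → β := fun i => if h : ∃ j, u (g i j) ≠ 0 then h.choose else Classical.arbitrary β
    with hJ
  refine Finset.card_le_card_of_injOn (fun i => g i (J i)) ?_ ?_
  · intro i hi
    obtain ⟨j, hj⟩ := key i hi
    have hex : ∃ j, u (g i j) ≠ 0 := ⟨j, hj⟩
    rw [Finset.mem_coe, Finset.mem_filter]
    refine ⟨Finset.mem_univ _, ?_⟩
    rw [hJ]
    simp only [hex, dif_pos]
    exact hex.choose_spec
  · intro i hi i' hi' hEq
    exact hg _ _ _ _ hEq

/-- A straight-line path flipping bits one at a time. -/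
lemma exists_path {β : Type*} [Fintype β] (s : β → ZMod 2) :
    ∃ (F : ℕ) (v : Fin (F + 1) → β → ZMod 2), v 0 = 0 ∧ v (Fin.last F) = s ∧
      ∀ i : Fin F, wt (v i.castSucc + v i.succ) ≤ 1 := by
  classical
  set N := Fintype.card β with hN
  set e : β ≃ Fin N := Fintype.equivFin β with he
  refine ⟨N, fun i b => if ((e b : ℕ)) < (i : ℕ) then s b else 0, ?_, ?_, ?_⟩
  · funext b; simp
  · funext b
    simp only [Fin.val_last]
    rw [if_pos (e b).isLt]
  · intro i
    unfold wt
    refine le_trans (Finset.card_le_card (t := {e.symm i}) ?_) (by simp)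
    intro b hb
    rw [Finset.mem_filter] at hb
    rw [Finset.mem_singleton]
    have hb2 := hb.2
    simp only [Pi.add_apply, Fin.coe_castSucc, Fin.val_succ] at hb2
    have hval : (e b : ℕ) = (i : ℕ) := by
      by_contra hne
      apply hb2
      by_cases hlt : (e b : ℕ) < (i : ℕ)
      · rw [if_pos hlt, if_pos (by omega)]
        exact CharTwo.add_self_eq_zero _
      · rw [if_neg hlt, if_neg (by omega)]
        exact add_zero 0
    have : e b = i := Fin.ext hval
    rw [← this, Equiv.symm_apply_apply]

lemma key1 {r1 n1 r2 n2 : ℕ} (H1 : Matrix (Fin r1) (Fin n1) (ZMod 2))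
    (H2 : Matrix (Fin r2) (Fin n2) (ZMod 2)) (z : Fin n2 → ZMod 2)
    (hz : H2.mulVec z = 0) (v : (Fin n1 × Fin n2) ⊕ (Fin r1 × Fin r2) → ZMod 2) :
    H1.mulVec (fun p => ∑ j, v (Sum.inl (p, j)) * z j)
      = fun i => ∑ j, ((HX H1 H2).mulVec v) (i, j) * z j := by
  funext i
  simp only [HX, Matrix.mulVec, dotProduct, Fintype.sum_sum_type, Fintype.sum_prod_type,
    Matrix.fromCols, Matrix.of_apply, Sum.elim_inl, Sum.elim_inr, Matrix.kroneckerMap_apply,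
    Matrix.one_apply, mul_ite, ite_mul, mul_one, mul_zero, zero_mul, one_mul,
    Finset.sum_ite_eq, Finset.sum_ite_eq', Finset.mem_univ, if_true, Finset.sum_add_distrib,
    Finset.sum_mul, Finset.mul_sum]
  have h2 : ∀ x : Fin n2,
      (∑ x_1 : Fin r1, ∑ x_2 : Fin r2, if i = x_1 then H2ᵀ x x_2 * v (Sum.inr (x_1, x_2)) else 0)
      = ∑ x_2 : Fin r2, H2ᵀ x x_2 * v (Sum.inr (i, x_2)) := by
    intro x
    rw [Finset.sum_comm]
    simp [Finset.sum_ite_eq]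
  simp only [h2, add_mul, Finset.sum_add_distrib, Finset.sum_mul]
  have h3 : ∑ x : Fin n2, ∑ x_2 : Fin r2, H2ᵀ x x_2 * v (Sum.inr (i, x_2)) * z x = 0 := by
    rw [Finset.sum_comm]
    apply Finset.sum_eq_zero
    intro q _
    have h4 : ∑ x : Fin n2, H2ᵀ x q * v (Sum.inr (i, q)) * z x
        = v (Sum.inr (i, q)) * (H2.mulVec z q) := by
      simp only [Matrix.mulVec, dotProduct, Finset.mul_sum, Matrix.transpose_apply]
      apply Finset.sum_congr rfl
      intro x _
      ring
    rw [h4, hz]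
    simp
  rw [h3, add_zero, Finset.sum_comm]
  apply Finset.sum_congr rfl
  intro p _
  apply Finset.sum_congr rfl
  intro x _
  ring

lemma key2 {r1 n1 r2 n2 : ℕ} (H1 : Matrix (Fin r1) (Fin n1) (ZMod 2))
    (H2 : Matrix (Fin r2) (Fin n2) (ZMod 2)) (z : Fin r1 → ZMod 2)
    (hz : H1ᵀ.mulVec z = 0) (v : (Fin n1 × Fin n2) ⊕ (Fin r1 × Fin r2) → ZMod 2) :
    H2ᵀ.mulVec (fun q => ∑ i, v (Sum.inr (i, q)) * z i)
      = fun j => ∑ i, ((HX H1 H2).mulVec v) (i, j) * z i := by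
  funext j
  simp only [HX, Matrix.mulVec, dotProduct, Fintype.sum_sum_type, Fintype.sum_prod_type,
    Matrix.fromCols, Matrix.of_apply, Sum.elim_inl, Sum.elim_inr, Matrix.kroneckerMap_apply,
    Matrix.one_apply, mul_ite, ite_mul, mul_one, mul_zero, zero_mul, one_mul,
    Finset.sum_ite_eq, Finset.sum_ite_eq', Finset.mem_univ, if_true, Finset.sum_add_distrib,
    Finset.sum_mul, Finset.mul_sum]
  have h2 : ∀ x : Fin r1,
      (∑ x_1 : Fin r1, ∑ x_2 : Fin r2, if x = x_1 then H2ᵀ j x_2 * v (Sum.inr (x_1, x_2)) else 0)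
      = ∑ x_2 : Fin r2, H2ᵀ j x_2 * v (Sum.inr (x, x_2)) := by
    intro x
    rw [Finset.sum_comm]
    simp [Finset.sum_ite_eq]
  simp only [h2, add_mul, Finset.sum_add_distrib, Finset.sum_mul]
  have h3 : ∑ x : Fin r1, ∑ x_1 : Fin n1, H1 x x_1 * v (Sum.inl (x_1, j)) * z x = 0 := by
    rw [Finset.sum_comm]
    apply Finset.sum_eq_zero
    intro p _
    have h4 : ∑ x : Fin r1, H1 x p * v (Sum.inl (p, j)) * z x
        = v (Sum.inl (p, j)) * (H1ᵀ.mulVec z p) := by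
      simp only [Matrix.mulVec, dotProduct, Finset.mul_sum, Matrix.transpose_apply]
      apply Finset.sum_congr rfl
      intro x _
      ring
    rw [h4, hz]
    simp
  rw [h3, zero_add, Finset.sum_comm]
  apply Finset.sum_congr rfl
  intro q _
  apply Finset.sum_congr rfl
  intro x _
  ring

end Aux

theorem stmt14 {r1 n1 r2 n2 a b c d : ℕ}
    (H1 : Matrix (Fin r1) (Fin n1) (ZMod 2)) (H2 : Matrix (Fin r2) (Fin n2) (ZMod 2))
    (xbar : Fin a → Fin n1 → ZMod 2) (hxker : ∀ k, H1.mulVec (xbar k) = 0)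
    (hxind : LinearIndependent (ZMod 2) xbar)
    (bbar : Fin b → Fin r2 → ZMod 2) (hbker : ∀ m, H2ᵀ.mulVec (bbar m) = 0)
    (hbind : LinearIndependent (ZMod 2) bbar)
    (y : Fin c → Fin n2 → ZMod 2) (hyunit : ∀ j, ∃ i, y j = Pi.single i 1)
    (hyinj : Function.Injective y)
    (hyind : ∀ μ : Fin c → ZMod 2, (∃ w, H2ᵀ.mulVec w = ∑ j, μ j • y j) → μ = 0)
    (avec : Fin d → Fin r1 → ZMod 2) (haunit : ∀ l, ∃ i, avec l = Pi.single i 1)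
    (hainj : Function.Injective avec)
    (haind : ∀ μ : Fin d → ZMod 2, (∃ w, H1.mulVec w = ∑ l, μ l • avec l) → μ = 0)
    (lam : Fin a → Fin c → ZMod 2) (kap : Fin d → Fin b → ZMod 2)
    (hne : lam ≠ 0 ∨ kap ≠ 0) :
    min (codeEB H1) (codeEB H2ᵀ) ≤ eb (HX H1 H2)
      (Sum.elim (fun p : Fin n1 × Fin n2 => ∑ k, ∑ j, lam k j * xbar k p.1 * y j p.2)
        (fun p : Fin r1 × Fin r2 => ∑ l, ∑ m, kap l m * avec l p.1 * bbar m p.2)) := by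
  classical
  set L : (Fin n1 × Fin n2) ⊕ (Fin r1 × Fin r2) → ZMod 2 :=
    Sum.elim (fun p : Fin n1 × Fin n2 => ∑ k, ∑ j, lam k j * xbar k p.1 * y j p.2)
      (fun p : Fin r1 × Fin r2 => ∑ l, ∑ m, kap l m * avec l p.1 * bbar m p.2) with hL
  have hSne : {B | ∃ F : ℕ, ∃ v : Fin (F + 1) → ((Fin n1 × Fin n2) ⊕ (Fin r1 × Fin r2)) → ZMod 2,
      v 0 = 0 ∧ v (Fin.last F) = L ∧
      (∀ i : Fin F, wt (v i.castSucc + v i.succ) ≤ 1) ∧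
      ∀ i, wt ((HX H1 H2).mulVec (v i)) ≤ B}.Nonempty := by
    obtain ⟨Fp, v, h0, hF, hflip⟩ := exists_path L
    exact ⟨Fintype.card (Fin r1 × Fin n2), Fp, v, h0, hF, hflip, fun i => wt_le_card _⟩
  have hmem : eb (HX H1 H2) L ∈ {B | ∃ F : ℕ,
      ∃ v : Fin (F + 1) → ((Fin n1 × Fin n2) ⊕ (Fin r1 × Fin r2)) → ZMod 2,
      v 0 = 0 ∧ v (Fin.last F) = L ∧
      (∀ i : Fin F, wt (v i.castSucc + v i.succ) ≤ 1) ∧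
      ∀ i, wt ((HX H1 H2).mulVec (v i)) ≤ B} := by
    unfold eb
    exact Nat.sInf_mem hSne
  obtain ⟨Fp, v, hv0, hvF, hflip, hEn⟩ := hmem
  rcases hne with hlam | hkap
  · -- use the left block
    have hex : ∃ k0 j0, lam k0 j0 ≠ 0 := by
      by_contra h
      push_neg at h
      exact hlam (funext fun k => funext fun j => h k j)
    obtain ⟨k0, j0, hk0⟩ := hex
    obtain ⟨z, hz, hzy⟩ := exists_selector H2 y hyind j0
    set T : (((Fin n1 × Fin n2) ⊕ (Fin r1 × Fin r2)) → ZMod 2) → (Fin n1 → ZMod 2) :=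
      fun u p => ∑ j, u (Sum.inl (p, j)) * z j with hT
    set c0 : Fin n1 → ZMod 2 := fun p => ∑ k, lam k j0 * xbar k p with hc0
    have hginj : ∀ (p : Fin n1) (j : Fin n2) (p' : Fin n1) (j' : Fin n2),
        (Sum.inl (p, j) : (Fin n1 × Fin n2) ⊕ (Fin r1 × Fin r2)) = Sum.inl (p', j') → p = p' := by
      intro p j p' j' h
      exact congrArg Prod.fst (Sum.inl.inj h)
    -- endpoint
    have hTL : T L = c0 := by
      funext p
      show (∑ j, L (Sum.inl (p, j)) * z j) = ∑ k, lam k j0 * xbar k p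
      have hstep : ∀ k, ∑ j, ∑ j', (lam k j' * xbar k p * y j' j) * z j
          = lam k j0 * xbar k p := by
        intro k
        rw [Finset.sum_comm]
        have hin : ∀ j' : Fin c, ∑ j, (lam k j' * xbar k p * y j' j) * z j
            = lam k j' * xbar k p * (y j' ⬝ᵥ z) := by
          intro j'
          simp only [dotProduct, Finset.mul_sum]
          apply Finset.sum_congr rfl
          intro j _
          ring
        simp only [hin, hzy]
        simp [Finset.sum_ite_eq']
      calc (∑ j, L (Sum.inl (p, j)) * z j)
          = ∑ j, ∑ k, ∑ j', (lam k j' * xbar k p * y j' j) * z j := by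
            apply Finset.sum_congr rfl
            intro j _
            rw [hL]
            simp only [Sum.elim_inl, Finset.sum_mul]
        _ = ∑ k, ∑ j, ∑ j', (lam k j' * xbar k p * y j' j) * z j := Finset.sum_comm
        _ = ∑ k, lam k j0 * xbar k p := by
            apply Finset.sum_congr rfl
            intro k _
            exact hstep k
    -- c0 as a linear combination
    have hc0sum : c0 = ∑ k, lam k j0 • xbar k := by
      funext p
      simp [hc0, Finset.sum_apply, smul_eq_mul]
    have hc0ne : c0 ≠ 0 := by
      intro hzero
      have := Fintype.linearIndependent_iff.mp hxind (fun k => lam k j0)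
        (by rw [← hc0sum, hzero])
      exact hk0 (this k0)
    have hc0ker : H1.mulVec c0 = 0 := by
      rw [hc0sum, ← Matrix.mulVecLin_apply, map_sum]
      simp [Matrix.mulVecLin_apply, hxker]
    -- the deformed path
    have hw0 : T (v 0) = 0 := by
      funext p
      simp [hT, hv0]
    have hwF : T (v (Fin.last Fp)) = c0 := by rw [hvF, hTL]
    have hwflip : ∀ i : Fin Fp, wt (T (v i.castSucc) + T (v i.succ)) ≤ 1 := by
      intro i
      have hadd : T (v i.castSucc) + T (v i.succ)
          = fun p => ∑ j, (v i.castSucc + v i.succ) (Sum.inl (p, j)) * z j := by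
        funext p
        simp [hT, Pi.add_apply, ← Finset.sum_add_distrib, add_mul]
      rw [hadd]
      exact le_trans (wt_comp_le (v i.castSucc + v i.succ) (fun _ j => z j)
        (fun p j => Sum.inl (p, j)) hginj) (hflip i)
    have hwE : ∀ i, wt (H1.mulVec (T (v i))) ≤ eb (HX H1 H2) L := by
      intro i
      rw [show T (v i) = fun p => ∑ j, (v i) (Sum.inl (p, j)) * z j from rfl,
        key1 H1 H2 z hz (v i)]
      refine le_trans ?_ (hEn i)
      exact wt_comp_le ((HX H1 H2).mulVec (v i)) (fun _ j => z j) (fun i' j => (i', j))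
        (fun a b a' b' h => congrArg Prod.fst h)
    have hebc : eb H1 c0 ≤ eb (HX H1 H2) L := by
      conv_lhs => unfold eb
      exact Nat.sInf_le ⟨Fp, fun i => T (v i), hw0, hwF, hwflip, hwE⟩
    have hcode : codeEB H1 ≤ eb H1 c0 := by
      unfold codeEB
      exact Nat.sInf_le ⟨c0, hc0ne, hc0ker, rfl⟩
    exact le_trans (min_le_left _ _) (le_trans hcode hebc)
  · -- use the right block
    have hex : ∃ l0 m0, kap l0 m0 ≠ 0 := by
      by_contra h
      push_neg at h
      exact hkap (funext fun l => funext fun m => h l m)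
    obtain ⟨l0, m0, hl0⟩ := hex
    have haind' : ∀ μ : Fin d → ZMod 2,
        (∃ w, (H1ᵀ)ᵀ.mulVec w = ∑ l, μ l • avec l) → μ = 0 := by
      intro μ ⟨w, hw⟩
      exact haind μ ⟨w, by rwa [Matrix.transpose_transpose] at hw⟩
    obtain ⟨z, hz, hza⟩ := exists_selector H1ᵀ avec haind' l0
    set T : (((Fin n1 × Fin n2) ⊕ (Fin r1 × Fin r2)) → ZMod 2) → (Fin r2 → ZMod 2) :=
      fun u q => ∑ i, u (Sum.inr (i, q)) * z i with hT
    set c0 : Fin r2 → ZMod 2 := fun q => ∑ m, kap l0 m * bbar m q with hc0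
    have hginj : ∀ (q : Fin r2) (i : Fin r1) (q' : Fin r2) (i' : Fin r1),
        (Sum.inr (i, q) : (Fin n1 × Fin n2) ⊕ (Fin r1 × Fin r2)) = Sum.inr (i', q') → q = q' := by
      intro q i q' i' h
      exact congrArg Prod.snd (Sum.inr.inj h)
    have hTL : T L = c0 := by
      funext q
      show (∑ i, L (Sum.inr (i, q)) * z i) = ∑ m, kap l0 m * bbar m q
      have hstep : ∀ l, ∑ i, ∑ m, (kap l m * avec l i * bbar m q) * z i
          = (if l = l0 then 1 else 0) * ∑ m, kap l m * bbar m q := by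
        intro l
        rw [Finset.sum_comm]
        have hin : ∀ m : Fin b, ∑ i, (kap l m * avec l i * bbar m q) * z i
            = kap l m * bbar m q * (avec l ⬝ᵥ z) := by
          intro m
          simp only [dotProduct, Finset.mul_sum]
          apply Finset.sum_congr rfl
          intro i _
          ring
        simp only [hin, hza]
        rw [Finset.mul_sum]
        apply Finset.sum_congr rfl
        intro m _
        ring
      calc (∑ i, L (Sum.inr (i, q)) * z i)
          = ∑ i, ∑ l, ∑ m, (kap l m * avec l i * bbar m q) * z i := by
            apply Finset.sum_congr rfl
            intro i _
            rw [hL]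
            simp only [Sum.elim_inr, Finset.sum_mul]
        _ = ∑ l, ∑ i, ∑ m, (kap l m * avec l i * bbar m q) * z i := Finset.sum_comm
        _ = ∑ l, (if l = l0 then 1 else 0) * ∑ m, kap l m * bbar m q := by
            apply Finset.sum_congr rfl
            intro l _
            exact hstep l
        _ = ∑ m, kap l0 m * bbar m q := by
            simp [Finset.sum_ite_eq']
    have hc0sum : c0 = ∑ m, kap l0 m • bbar m := by
      funext q
      simp [hc0, Finset.sum_apply, smul_eq_mul]
    have hc0ne : c0 ≠ 0 := by
      intro hzero
      have := Fintype.linearIndependent_iff.mp hbind (fun m => kap l0 m)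
        (by rw [← hc0sum, hzero])
      exact hl0 (this m0)
    have hc0ker : H2ᵀ.mulVec c0 = 0 := by
      rw [hc0sum, ← Matrix.mulVecLin_apply, map_sum]
      simp only [_root_.map_smul, Matrix.mulVecLin_apply, hbker, smul_zero,
        Finset.sum_const_zero]
    have hw0 : T (v 0) = 0 := by
      funext q
      simp [hT, hv0]
    have hwF : T (v (Fin.last Fp)) = c0 := by rw [hvF, hTL]
    have hwflip : ∀ i : Fin Fp, wt (T (v i.castSucc) + T (v i.succ)) ≤ 1 := by
      intro i
      have hadd : T (v i.castSucc) + T (v i.succ)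
          = fun q => ∑ i', (v i.castSucc + v i.succ) (Sum.inr (i', q)) * z i' := by
        funext q
        simp [hT, Pi.add_apply, ← Finset.sum_add_distrib, add_mul]
      rw [hadd]
      exact le_trans (wt_comp_le (v i.castSucc + v i.succ) (fun _ i' => z i')
        (fun q i' => Sum.inr (i', q)) hginj) (hflip i)
    have hwE : ∀ i, wt (H2ᵀ.mulVec (T (v i))) ≤ eb (HX H1 H2) L := by
      intro i
      rw [show T (v i) = fun q => ∑ i', (v i) (Sum.inr (i', q)) * z i' from rfl,
        key2 H1 H2 z hz (v i)]
      refine le_trans ?_ (hEn i)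
      exact wt_comp_le ((HX H1 H2).mulVec (v i)) (fun _ i' => z i') (fun j i' => (i', j))
        (fun a b a' b' h => congrArg Prod.snd h)
    have hebc : eb H2ᵀ c0 ≤ eb (HX H1 H2) L := by
      conv_lhs => unfold eb
      exact Nat.sInf_le ⟨Fp, fun i => T (v i), hw0, hwF, hwflip, hwE⟩
    have hcode : codeEB H2ᵀ ≤ eb H2ᵀ c0 := by
      unfold codeEB
      exact Nat.sInf_le ⟨c0, hc0ne, hc0ker, rfl⟩
    exact le_trans (min_le_right _ _) (le_trans hcode hebc)
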